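/- (Contour limit (T.e.1.e2tilde.1.0)) Let a, R ∈ ℝ with a < 0 and R > −a. Then lim_{ν → 0⁺} (1/(2πi)) ∫₀^R ( e^{−iν}/(a + e^{−iν} r) − e^{iν}/(a + e^{iν} r) ) dr = 1, i.e. the function ν ↦ (1/(2πi)) ∫₀^R ( e^{−iν}/(a + e^{−iν} r) − e^{iν}/(a + e^{iν} r) ) dr, defined for small ν > 0, tends to 1 as ν tends to 0 from the right. -/

import Mathlib

open intervalIntegral

noncomputable section

/-- Contour limit (T.e.1.e2tilde.1.0). -/
theorem contour_limit (a R : ℝ) (ha : a < 0) (hR : -a < R) :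
    Filter.Tendsto
      (fun ν : ℝ => (1 / (2 * (Real.pi : ℂ) * Complex.I)) *
        ∫ r in (0:ℝ)..R,
          (Complex.exp (-Complex.I * (ν : ℂ)) /
              ((a : ℂ) + Complex.exp (-Complex.I * (ν : ℂ)) * (r : ℂ)) -
            Complex.exp (Complex.I * (ν : ℂ)) /
              ((a : ℂ) + Complex.exp (Complex.I * (ν : ℂ)) * (r : ℂ))))
      (nhdsWithin 0 (Set.Ioi 0)) (nhds 1) := by
  classical
  have ha' : a ≠ 0 := ne_of_lt ha
  set g : ℝ → ℝ := fun ν => (Real.arctan ((R + a*Real.cos ν)/(-a*Real.sin ν))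
      - Real.arctan ((a*Real.cos ν)/(-a*Real.sin ν)))/Real.pi with hg
  -- the limit of the real-valued function g
  have hlim : Filter.Tendsto g (nhdsWithin 0 (Set.Ioi 0)) (nhds 1) := by
    have hRa : 0 < R + a := by linarith
    have hden : Filter.Tendsto (fun ν : ℝ => -a*Real.sin ν) (nhdsWithin 0 (Set.Ioi 0))
        (nhdsWithin 0 (Set.Ioi 0)) := by
      rw [tendsto_nhdsWithin_iff]
      constructor
      · have : Continuous (fun ν : ℝ => -a*Real.sin ν) := by fun_prop
        simpa using (this.tendsto 0).mono_left nhdsWithin_le_nhds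
      · filter_upwards [Ioo_mem_nhdsGT_of_mem (Set.left_mem_Ico.2 Real.pi_pos)] with ν hν
        have hsp := Real.sin_pos_of_pos_of_lt_pi hν.1 hν.2
        have : 0 < -a * Real.sin ν := by nlinarith
        exact this
    have hinv : Filter.Tendsto (fun ν : ℝ => (-a*Real.sin ν)⁻¹) (nhdsWithin 0 (Set.Ioi 0))
        Filter.atTop := tendsto_inv_nhdsGT_zero.comp hden
    have hnum1 : Filter.Tendsto (fun ν : ℝ => R + a*Real.cos ν) (nhdsWithin 0 (Set.Ioi 0))
        (nhds (R + a)) := by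
      have : Continuous (fun ν : ℝ => R + a*Real.cos ν) := by fun_prop
      simpa using (this.tendsto 0).mono_left nhdsWithin_le_nhds
    have hnum2 : Filter.Tendsto (fun ν : ℝ => a*Real.cos ν) (nhdsWithin 0 (Set.Ioi 0))
        (nhds a) := by
      have : Continuous (fun ν : ℝ => a*Real.cos ν) := by fun_prop
      simpa using (this.tendsto 0).mono_left nhdsWithin_le_nhds
    have hu : Filter.Tendsto (fun ν : ℝ => (R + a*Real.cos ν)/(-a*Real.sin ν))
        (nhdsWithin 0 (Set.Ioi 0)) Filter.atTop := by
      simpa [div_eq_mul_inv] using hnum1.pos_mul_atTop hRa hinv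
    have hv : Filter.Tendsto (fun ν : ℝ => (a*Real.cos ν)/(-a*Real.sin ν))
        (nhdsWithin 0 (Set.Ioi 0)) Filter.atBot := by
      simpa [div_eq_mul_inv] using hnum2.neg_mul_atTop ha hinv
    have h1 : Filter.Tendsto (fun ν : ℝ => Real.arctan ((R + a*Real.cos ν)/(-a*Real.sin ν)))
        (nhdsWithin 0 (Set.Ioi 0)) (nhds (Real.pi/2)) :=
      (Real.tendsto_arctan_atTop.mono_right nhdsWithin_le_nhds).comp hu
    have h2 : Filter.Tendsto (fun ν : ℝ => Real.arctan ((a*Real.cos ν)/(-a*Real.sin ν)))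
        (nhdsWithin 0 (Set.Ioi 0)) (nhds (-(Real.pi/2))) :=
      (Real.tendsto_arctan_atBot.mono_right nhdsWithin_le_nhds).comp hv
    have hfin := (h1.sub h2).div_const Real.pi
    convert hfin using 2
    field_simp
    norm_num
  -- evaluate the expression for ν ∈ Ioo 0 π
  have hmain : ∀ ν ∈ Set.Ioo (0:ℝ) Real.pi,
      (1 / (2 * (Real.pi : ℂ) * Complex.I)) *
        (∫ r in (0:ℝ)..R,
          (Complex.exp (-Complex.I * (ν : ℂ)) /
              ((a : ℂ) + Complex.exp (-Complex.I * (ν : ℂ)) * (r : ℂ)) -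
            Complex.exp (Complex.I * (ν : ℂ)) /
              ((a : ℂ) + Complex.exp (Complex.I * (ν : ℂ)) * (r : ℂ))))
      = ((g ν : ℝ) : ℂ) := by
    intro ν hν
    set s := Real.sin ν with hsdef
    set c := Real.cos ν with hcdef
    have hs : 0 < s := Real.sin_pos_of_pos_of_lt_pi hν.1 hν.2
    have hs' : s ≠ 0 := hs.ne'
    have hsc : c^2 + s^2 = 1 := by
      rw [hsdef, hcdef]; exact Real.cos_sq_add_sin_sq ν
    have hexp1 : Complex.exp (Complex.I * (ν:ℂ)) = (c:ℂ) + (s:ℂ)*Complex.I := by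
      rw [mul_comm, Complex.exp_mul_I, ← Complex.ofReal_cos, ← Complex.ofReal_sin]
    have hexp2 : Complex.exp (-Complex.I * (ν:ℂ)) = (c:ℂ) - (s:ℂ)*Complex.I := by
      have : -Complex.I * (ν:ℂ) = ((-ν : ℝ):ℂ) * Complex.I := by push_cast; ring
      rw [this, Complex.exp_mul_I, ← Complex.ofReal_cos, ← Complex.ofReal_sin]
      simp [hcdef, hsdef]
      ring
    -- pointwise identity
    have key : ∀ r : ℝ,
        Complex.exp (-Complex.I * (ν : ℂ)) /
              ((a : ℂ) + Complex.exp (-Complex.I * (ν : ℂ)) * (r : ℂ)) -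
            Complex.exp (Complex.I * (ν : ℂ)) /
              ((a : ℂ) + Complex.exp (Complex.I * (ν : ℂ)) * (r : ℂ))
        = 2*Complex.I*(((-a*s)/((r + a*c)^2 + (a*s)^2) : ℝ) : ℂ) := by
      intro r
      rw [hexp1, hexp2]
      have hden : ∀ e : ℝ, e ≠ 0 → ((a:ℂ) + ((c:ℂ) + (e:ℂ)*Complex.I)*(r:ℂ)) ≠ 0 := by
        intro e he h
        have him := congrArg Complex.im h
        have hre := congrArg Complex.re h
        simp [Complex.add_im, Complex.add_re, Complex.mul_im, Complex.mul_re] at him hre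
        rcases him with he' | hr
        · exact he he'
        · rw [hr] at hre; simp at hre; exact ha' hre
      have h1 : ((a:ℂ) + ((c:ℂ) - s*Complex.I)*r) ≠ 0 := by
        have := hden (-s) (neg_ne_zero.2 hs'); push_cast at this; convert this using 2; ring
      have h2 : ((a:ℂ) + ((c:ℂ) + s*Complex.I)*r) ≠ 0 := hden s hs'
      have hD : ((r + a*c)^2 + (a*s)^2 : ℝ) ≠ 0 := by positivity
      have hz : ((a:ℂ) + ((c:ℂ) - s*Complex.I)*r) * ((a:ℂ) + ((c:ℂ) + s*Complex.I)*r)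
          = (((r + a*c)^2 + (a*s)^2 : ℝ) : ℂ) := by
        have hscC : (c:ℂ)^2 + (s:ℂ)^2 = 1 := by exact_mod_cast congrArg (Complex.ofReal) hsc
        push_cast
        linear_combination ((r:ℂ)^2 - (a:ℂ)^2)*hscC - (s:ℂ)^2*(r:ℂ)^2*Complex.I_sq
      rw [div_sub_div _ _ h1 h2, hz]
      have hnum : ((c:ℂ) - s*Complex.I) * ((a:ℂ) + ((c:ℂ) + s*Complex.I)*r) -
          ((a:ℂ) + ((c:ℂ) - s*Complex.I)*r) * ((c:ℂ) + s*Complex.I) = -2*a*s*Complex.I := by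
        ring
      rw [hnum]
      push_cast
      field_simp
    -- rewrite the integral
    have hint : (∫ r in (0:ℝ)..R,
          (Complex.exp (-Complex.I * (ν : ℂ)) /
              ((a : ℂ) + Complex.exp (-Complex.I * (ν : ℂ)) * (r : ℂ)) -
            Complex.exp (Complex.I * (ν : ℂ)) /
              ((a : ℂ) + Complex.exp (Complex.I * (ν : ℂ)) * (r : ℂ))))
        = 2*Complex.I*((∫ r in (0:ℝ)..R, (-a*s)/((r + a*c)^2 + (a*s)^2) : ℝ) : ℂ) := by
      rw [intervalIntegral.integral_congr (g := fun r : ℝ =>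
          2*Complex.I*(((-a*s)/((r + a*c)^2 + (a*s)^2) : ℝ) : ℂ)) (fun r _ => key r)]
      rw [intervalIntegral.integral_const_mul, intervalIntegral.integral_ofReal]
    -- evaluate the real integral
    have hreal : (∫ r in (0:ℝ)..R, (-a*s)/((r + a*c)^2 + (a*s)^2))
        = Real.arctan ((R + a*c)/(-a*s)) - Real.arctan ((a*c)/(-a*s)) := by
      have hF : ∀ r ∈ Set.uIcc (0:ℝ) R,
          HasDerivAt (fun x => Real.arctan ((x + a*c)/(-a*s)))
            ((-a*s)/((r + a*c)^2 + (a*s)^2)) r := by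
        intro r _
        have hd1 : HasDerivAt (fun x : ℝ => (x + a*c)/(-a*s)) (1/(-a*s)) r := by
          simpa using ((hasDerivAt_id r).add_const (a*c)).div_const (-a*s)
        have hd2 := (Real.hasDerivAt_arctan ((r + a*c)/(-a*s))).comp r hd1
        refine hd2.congr_deriv ?_
        have h3 : ((r+a*c)^2 + (a*s)^2 : ℝ) ≠ 0 := by positivity
        field_simp
        ring
      have hfi : IntervalIntegrable (fun r : ℝ => (-a*s)/((r + a*c)^2 + (a*s)^2))
          MeasureTheory.volume 0 R := by
        apply Continuous.intervalIntegrable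
        apply continuous_const.div (by fun_prop)
        intro r; positivity
      rw [intervalIntegral.integral_eq_sub_of_hasDerivAt hF hfi]
      norm_num
    have hπ : ((Real.pi : ℝ) : ℂ) ≠ 0 := by
      exact_mod_cast Real.pi_ne_zero
    have hscalar : ∀ x : ℝ, (1 / (2 * (Real.pi : ℂ) * Complex.I)) * (2*Complex.I*(x:ℂ))
        = ((x/Real.pi : ℝ) : ℂ) := by
      intro x
      rw [Complex.ofReal_div]
      field_simp [Complex.I_ne_zero]
    rw [hint, hreal]
    simp only [hg]
    exact hscalar _
  -- assemble
  have hcast : Filter.Tendsto (fun ν => ((g ν : ℝ) : ℂ)) (nhdsWithin 0 (Set.Ioi 0))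
      (nhds 1) := by
    have := (Complex.continuous_ofReal.tendsto 1).comp hlim
    rw [Complex.ofReal_one] at this; exact this
  apply hcast.congr'
  filter_upwards [Ioo_mem_nhdsGT_of_mem (Set.left_mem_Ico.2 Real.pi_pos)] with ν hν
  exact (hmain ν hν).symm

end
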